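/- Let μ : L → Ĝ satisfy ∂ μ = 1 (trivial Gauss law syndrome). Then there exists c ∈ ℂ with W^μ ∘ Π_pn = c • Π_pn if and only if μ ℓ = 1 for every link ℓ. Consequently, if χ₁, χ₂ : L → Ĝ are distinct with ∂ χ₁ = ∂ χ₂, then Π_pn ∘ W^{χ₁⁻¹} ∘ W^{χ₂} ∘ Π_pn is not a scalar multiple of Π_pn; that is, two distinct Wilson line errors with the same syndrome are never jointly correctable, so a correctable set of such errors contains at most one representative from each fiber of the Gauss law map. -/
import Mathlib


open Finset

variable {V L : Type*} [Fintype V] [Fintype L] [DecidableEq V]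
variable {G : Type*} [CommGroup G] [Fintype G]

/-- The gauge transformation `U^g` on the kinematical Hilbert space `(L → G) → ℂ`. -/
def Ugauge (s t : L → V) (g : V → G) : ((L → G) → ℂ) → ((L → G) → ℂ) :=
  fun f a => f fun ℓ => (g (s ℓ))⁻¹ * a ℓ * g (t ℓ)

/-- The Wilson line (multiplication) operator `W^χ` for a family of characters `χ`. -/
def Wline (χ : L → (G →* ℂˣ)) : ((L → G) → ℂ) → ((L → G) → ℂ) :=
  fun f a => (((∏ ℓ, χ ℓ (a ℓ))⁻¹ : ℂˣ) : ℂ) • f a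

/-- The Gauss law map `∂`, assigning to link character data the vertex charge it excites. -/
def gaussMap (s t : L → V) (χ : L → (G →* ℂˣ)) : V → (G →* ℂˣ) :=
  fun v => (∏ ℓ ∈ univ.filter fun ℓ => s ℓ = v, χ ℓ) *
    ∏ ℓ ∈ univ.filter fun ℓ => t ℓ = v, (χ ℓ)⁻¹

/-- The projection `Π_pn` onto the gauge-invariant (perspective-neutral) subspace. -/
noncomputable def piPn (s t : L → V) (G : Type*) [CommGroup G] [Fintype G] :
    ((L → G) → ℂ) → ((L → G) → ℂ) :=
  ((Fintype.card G : ℂ) ^ Fintype.card V)⁻¹ • ∑ g : V → G, Ugauge s t g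

lemma piPn_apply (s t : L → V) (f : (L → G) → ℂ) (a : L → G) :
    piPn s t G f a = ((Fintype.card G : ℂ) ^ Fintype.card V)⁻¹ *
      ∑ g : V → G, f (fun ℓ => (g (s ℓ))⁻¹ * a ℓ * g (t ℓ)) := by
  simp [piPn, Ugauge, Finset.sum_apply, smul_eq_mul]

lemma cardNe : ((Fintype.card G : ℂ) ^ Fintype.card V) ≠ 0 := by
  exact pow_ne_zero _ (Nat.cast_ne_zero.mpr Fintype.card_ne_zero)

lemma piPn_one (s t : L → V) : piPn s t G (fun _ => (1 : ℂ)) = fun _ => 1 := by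
  funext a
  rw [piPn_apply]
  simp only [Finset.sum_const, Finset.card_univ, nsmul_eq_mul, mul_one]
  rw [Fintype.card_fun]
  push_cast
  exact inv_mul_cancel₀ cardNe

set_option linter.unusedSectionVars false

lemma wilson_scalar_iff (s t : L → V) (μ : L → (G →* ℂˣ)) :
    (∃ c : ℂ, Wline μ ∘ piPn s t G = c • piPn s t G) ↔ ∀ ℓ : L, μ ℓ = 1 := by
  classical
  constructor
  · rintro ⟨c, hc⟩ ℓ₀
    have key : ∀ a : L → G, (((∏ ℓ, μ ℓ (a ℓ))⁻¹ : ℂˣ) : ℂ) = c := by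
      intro a
      have h := congrFun (congrFun hc (fun _ => (1 : ℂ))) a
      simp only [Function.comp_apply, piPn_one, Wline, Pi.smul_apply, smul_eq_mul] at h
      simpa [piPn_one s t] using h
    have hc1 : c = 1 := by
      have h := key (fun _ => (1 : G))
      simpa using h.symm
    have key2 : ∀ a : L → G, (∏ ℓ, μ ℓ (a ℓ)) = 1 := by
      intro a
      have h := key a
      rw [hc1] at h
      have : ((∏ ℓ, μ ℓ (a ℓ))⁻¹ : ℂˣ) = 1 := Units.ext (by simpa using h)
      exact inv_eq_one.mp this
    ext x
    have h := key2 (Function.update (fun _ => (1 : G)) ℓ₀ x)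
    rw [Fintype.prod_eq_single ℓ₀ (fun ℓ hℓ => by
      simp [Function.update_of_ne hℓ])] at h
    simpa using h
  · intro h
    refine ⟨1, ?_⟩
    funext f a
    simp [Wline, h]

lemma source_target_prod (s t : L → V) (μ : L → (G →* ℂˣ))
    (hμ : gaussMap s t μ = 1) (g : V → G) :
    ∏ ℓ, μ ℓ (g (s ℓ)) = ∏ ℓ, μ ℓ (g (t ℓ)) := by
  classical
  have hv : ∀ v : V,
      (∏ ℓ ∈ univ.filter fun ℓ => s ℓ = v, μ ℓ (g v)) =
      (∏ ℓ ∈ univ.filter fun ℓ => t ℓ = v, μ ℓ (g v)) := by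
    intro v
    have h := congrFun hμ v
    have h2 := congrArg (fun φ : G →* ℂˣ => φ (g v)) h
    simp only [gaussMap, MonoidHom.mul_apply, MonoidHom.one_apply,
      MonoidHom.finset_prod_apply, MonoidHom.inv_apply] at h2
    rw [Finset.prod_inv_distrib] at h2
    exact (mul_inv_eq_one.mp h2)
  calc ∏ ℓ, μ ℓ (g (s ℓ))
      = ∏ v, ∏ ℓ ∈ univ.filter fun ℓ => s ℓ = v, μ ℓ (g (s ℓ)) :=
        (Finset.prod_fiberwise univ s _).symm
    _ = ∏ v, ∏ ℓ ∈ univ.filter fun ℓ => s ℓ = v, μ ℓ (g v) := by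
        refine Finset.prod_congr rfl fun v _ => Finset.prod_congr rfl fun ℓ hℓ => ?_
        rw [(Finset.mem_filter.mp hℓ).2]
    _ = ∏ v, ∏ ℓ ∈ univ.filter fun ℓ => t ℓ = v, μ ℓ (g v) :=
        Finset.prod_congr rfl fun v _ => hv v
    _ = ∏ v, ∏ ℓ ∈ univ.filter fun ℓ => t ℓ = v, μ ℓ (g (t ℓ)) := by
        refine Finset.prod_congr rfl fun v _ => Finset.prod_congr rfl fun ℓ hℓ => ?_
        rw [(Finset.mem_filter.mp hℓ).2]
    _ = ∏ ℓ, μ ℓ (g (t ℓ)) := Finset.prod_fiberwise univ t _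

lemma wilson_prod_gauge (s t : L → V) (μ : L → (G →* ℂˣ))
    (hμ : gaussMap s t μ = 1) (g : V → G) (a : L → G) :
    ∏ ℓ, μ ℓ ((g (s ℓ))⁻¹ * a ℓ * g (t ℓ)) = ∏ ℓ, μ ℓ (a ℓ) := by
  simp only [map_mul, map_inv, Finset.prod_mul_distrib, Finset.prod_inv_distrib]
  rw [source_target_prod s t μ hμ g, mul_comm, ← mul_assoc, mul_inv_cancel, one_mul]

lemma piPn_idem (s t : L → V) : piPn s t G ∘ piPn s t G = piPn s t G := by
  funext f a
  simp only [Function.comp_apply, piPn_apply]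
  have hg : ∀ g : V → G,
      (∑ g' : V → G, f (fun ℓ =>
          (g' (s ℓ))⁻¹ * ((g (s ℓ))⁻¹ * a ℓ * g (t ℓ)) * g' (t ℓ))) =
      ∑ g'' : V → G, f (fun ℓ => (g'' (s ℓ))⁻¹ * a ℓ * g'' (t ℓ)) := by
    intro g
    apply Fintype.sum_equiv (Equiv.mulLeft g)
    intro g'
    congr 1
    funext ℓ
    simp only [Equiv.coe_mulLeft, Pi.mul_apply, mul_inv_rev]
    group
  simp only [hg]
  rw [Finset.sum_const, Finset.card_univ, Fintype.card_fun, nsmul_eq_mul]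
  push_cast
  rw [← mul_assoc, ← mul_assoc, mul_comm (((Fintype.card G : ℂ) ^ Fintype.card V)⁻¹)
    ((Fintype.card G : ℂ) ^ Fintype.card V), mul_inv_cancel₀ cardNe, one_mul]

lemma piPn_comm_wline (s t : L → V) (μ : L → (G →* ℂˣ))
    (hμ : gaussMap s t μ = 1) :
    piPn s t G ∘ Wline μ = Wline μ ∘ piPn s t G := by
  funext f a
  simp only [Function.comp_apply, piPn_apply, Wline, smul_eq_mul]
  simp only [wilson_prod_gauge s t μ hμ]
  rw [← Finset.mul_sum]
  ring

lemma wline_comp (χ₁ χ₂ : L → (G →* ℂˣ)) :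
    Wline χ₁ ∘ Wline χ₂ = Wline (χ₁ * χ₂) := by
  funext f a
  simp only [Function.comp_apply, Wline, Pi.mul_apply, MonoidHom.mul_apply,
    Finset.prod_mul_distrib, mul_inv, Units.val_mul, smul_eq_mul]
  ring

lemma gaussMap_mul (s t : L → V) (χ₁ χ₂ : L → (G →* ℂˣ)) :
    gaussMap s t (χ₁ * χ₂) = gaussMap s t χ₁ * gaussMap s t χ₂ := by
  funext v
  simp only [gaussMap, Pi.mul_apply]
  rw [Finset.prod_mul_distrib,
    Finset.prod_congr rfl (fun ℓ _ => mul_inv (χ₁ ℓ) (χ₂ ℓ)),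
    Finset.prod_mul_distrib]
  exact mul_mul_mul_comm
    (∏ x ∈ filter (fun ℓ => s ℓ = v) univ, χ₁ x)
    (∏ x ∈ filter (fun ℓ => s ℓ = v) univ, χ₂ x)
    (∏ x ∈ filter (fun ℓ => t ℓ = v) univ, (χ₁ x)⁻¹)
    (∏ x ∈ filter (fun ℓ => t ℓ = v) univ, (χ₂ x)⁻¹)

/-- For `μ` with trivial Gauss law syndrome, `W^μ ∘ Π_pn` is a scalar multiple of `Π_pn`
iff `μ` is trivial on every link. Consequently, two distinct Wilson line errors with the
same syndrome are never jointly correctable: their product restricted to the code space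
is not a scalar multiple of `Π_pn`. -/
theorem wilson_scalar_iff_trivial (s t : L → V)
    (μ : L → (G →* ℂˣ)) (hμ : gaussMap s t μ = 1) :
    ((∃ c : ℂ, Wline μ ∘ piPn s t G = c • piPn s t G) ↔ ∀ ℓ : L, μ ℓ = 1) ∧
      ∀ χ₁ χ₂ : L → (G →* ℂˣ), χ₁ ≠ χ₂ → gaussMap s t χ₁ = gaussMap s t χ₂ →
        ¬∃ c : ℂ,
          piPn s t G ∘ Wline χ₁⁻¹ ∘ Wline χ₂ ∘ piPn s t G = c • piPn s t G := by
  refine ⟨wilson_scalar_iff s t μ, ?_⟩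
  rintro χ₁ χ₂ hne hsyn ⟨c, hc⟩
  set μ' : L → (G →* ℂˣ) := χ₁⁻¹ * χ₂ with hμ'
  have hmul : χ₁ * μ' = χ₂ := by
    funext ℓ
    simp only [hμ', Pi.mul_apply, Pi.inv_apply]
    exact mul_inv_cancel_left (χ₁ ℓ) (χ₂ ℓ)
  have h1 : gaussMap s t χ₁ * gaussMap s t μ' = gaussMap s t χ₁ := by
    rw [← gaussMap_mul, hmul, ← hsyn]
  have hgauss' : gaussMap s t μ' = 1 := by
    funext v
    have h2 := congrFun h1 v
    simp only [Pi.mul_apply] at h2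
    calc gaussMap s t μ' v
        = (gaussMap s t χ₁ v)⁻¹ * (gaussMap s t χ₁ v * gaussMap s t μ' v) :=
          (inv_mul_cancel_left (gaussMap s t χ₁ v) (gaussMap s t μ' v)).symm
      _ = (gaussMap s t χ₁ v)⁻¹ * gaussMap s t χ₁ v := by rw [h2]
      _ = 1 := inv_mul_cancel (gaussMap s t χ₁ v)
  have hrew : piPn s t G ∘ Wline χ₁⁻¹ ∘ Wline χ₂ ∘ piPn s t G
      = Wline μ' ∘ piPn s t G := by
    calc piPn s t G ∘ Wline χ₁⁻¹ ∘ Wline χ₂ ∘ piPn s t G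
        = (piPn s t G ∘ (Wline χ₁⁻¹ ∘ Wline χ₂)) ∘ piPn s t G := by
          rw [Function.comp_assoc, Function.comp_assoc]
      _ = (piPn s t G ∘ Wline μ') ∘ piPn s t G := by rw [wline_comp]
      _ = (Wline μ' ∘ piPn s t G) ∘ piPn s t G := by
          rw [piPn_comm_wline s t μ' hgauss']
      _ = Wline μ' ∘ (piPn s t G ∘ piPn s t G) := by rw [Function.comp_assoc]
      _ = Wline μ' ∘ piPn s t G := by rw [piPn_idem]
  rw [hrew] at hc
  have htriv : ∀ ℓ : L, μ' ℓ = 1 := (wilson_scalar_iff s t μ').mp ⟨c, hc⟩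
  apply hne
  funext ℓ
  have h := htriv ℓ
  rw [hμ'] at h
  simp only [Pi.mul_apply, Pi.inv_apply] at h
  exact (inv_mul_eq_one.mp h)
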